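/- For two linear chord diagrams C, C' on 2k vertices, the pairing α_C(a_{C'}) equals ±(2g)^r, where r is the number of connected components of the union graph C ∪ C' on the vertex set {1,...,2k}. -/

import Mathlib

/-- The standard symplectic vector space `H_ℚ = ℚ^{2g}`. -/
abbrev SympVec (g : ℕ) : Type := (Fin g ⊕ Fin g) → ℚ

open scoped TensorProduct

/-- Position `2s` among the `2k` vertices. -/
def posA {k : ℕ} (s : Fin k) : Fin (2 * k) := ⟨2 * s.1, by have := s.isLt; omega⟩

/-- Position `2s+1` among the `2k` vertices. -/
def posB {k : ℕ} (s : Fin k) : Fin (2 * k) := ⟨2 * s.1 + 1, by have := s.isLt; omega⟩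

/-- A linear chord diagram on `{1,...,2k}`: a partition into `k` pairs `(i_s, j_s)` with
`i_s < j_s`, recorded canonically (chords listed with increasing first entries) via the
permutation sending `(1,2,...,2k)` to `(i_1,j_1,...,i_k,j_k)`. -/
abbrev LinearChordDiagram (k : ℕ) : Type :=
  {π : Equiv.Perm (Fin (2 * k)) //
    (∀ s : Fin k, π (posA s) < π (posB s)) ∧
      ∀ s t : Fin k, s < t → π (posA s) < π (posA t)}


noncomputable def chordVec (g k : ℕ) (π : Equiv.Perm (Fin (2 * k)))
    (t : Fin k → Fin g × Bool) (i : Fin (2 * k)) : SympVec g :=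
  let j := π.symm i
  let s : Fin k := ⟨j.1 / 2, by have := j.isLt; omega⟩
  if j.1 % 2 = 0 then
    (if (t s).2 then Pi.single (Sum.inl (t s).1) 1 else Pi.single (Sum.inr (t s).1) 1)
  else
    (if (t s).2 then Pi.single (Sum.inr (t s).1) 1 else Pi.single (Sum.inl (t s).1) 1)

noncomputable def chordCoeff {g k : ℕ} (t : Fin k → Fin g × Bool) : ℚ :=
  ∏ s : Fin k, (if (t s).2 then 1 else -1)

noncomputable def aTensor (g k : ℕ) (π : Equiv.Perm (Fin (2 * k))) :
    ⨂[ℚ] _ : Fin (2 * k), SympVec g :=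
  ((Equiv.Perm.sign π : ℤ) : ℚ) •
    ∑ t : Fin k → Fin g × Bool, chordCoeff t • PiTensorProduct.tprod ℚ (chordVec g k π t)


noncomputable def pairForm (g : ℕ) : SympVec g →ₗ[ℚ] SympVec g →ₗ[ℚ] ℚ :=
  Matrix.toLinearMap₂' ℚ (Matrix.J (Fin g) ℚ)

noncomputable def contractPair (g : ℕ) : (⨂[ℚ] _ : Fin 2, SympVec g) →ₗ[ℚ] ℚ :=
  (TensorProduct.lift (pairForm g)) ∘ₗ
    (TensorProduct.congr (PiTensorProduct.subsingletonEquiv (0 : Fin 1))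
        (PiTensorProduct.subsingletonEquiv (0 : Fin 1))).toLinearMap ∘ₗ
    (PiTensorProduct.tmulEquiv (ι := Fin 1) (ι₂ := Fin 1) ℚ (SympVec g)).symm.toLinearMap ∘ₗ
    (PiTensorProduct.reindex ℚ (fun _ : Fin 2 => SympVec g)
      (finSumFinEquiv (m := 1) (n := 1)).symm).toLinearMap

noncomputable def contractStep (g k : ℕ) :
    (⨂[ℚ] _ : Fin (2 * (k + 1)), SympVec g) →ₗ[ℚ] ⨂[ℚ] _ : Fin (2 * k), SympVec g :=
  (TensorProduct.lid ℚ _).toLinearMap ∘ₗ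
    (TensorProduct.map (contractPair g) LinearMap.id) ∘ₗ
    (PiTensorProduct.tmulEquiv (ι := Fin 2) (ι₂ := Fin (2 * k)) ℚ (SympVec g)).symm.toLinearMap ∘ₗ
    (PiTensorProduct.reindex ℚ (fun _ : Fin (2 * (k + 1)) => SympVec g)
      ((finCongr (by ring : 2 * (k + 1) = 2 + 2 * k)).trans finSumFinEquiv.symm)).toLinearMap

/-- The full contraction of `H^{⊗2k}` pairing consecutive factors `(1,2),(3,4),...` by `μ`. -/
noncomputable def fullContraction (g : ℕ) : (k : ℕ) →
    (⨂[ℚ] _ : Fin (2 * k), SympVec g) →ₗ[ℚ] ℚ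
  | 0 =>
    haveI : IsEmpty (Fin (2 * 0)) := ⟨fun i => i.elim0⟩
    (PiTensorProduct.isEmptyEquiv (Fin (2 * 0))).toLinearMap
  | (k + 1) => (fullContraction g k) ∘ₗ contractStep g k

noncomputable def alphaHat (g k : ℕ) (π : Equiv.Perm (Fin (2 * k))) :
    (⨂[ℚ] _ : Fin (2 * k), SympVec g) →ₗ[ℚ] ℚ :=
  ((Equiv.Perm.sign π : ℤ) : ℚ) •
    ((fullContraction g k) ∘ₗ
      (PiTensorProduct.reindex ℚ (fun _ : Fin (2 * k) => SympVec g) (π⁻¹ : Equiv.Perm (Fin (2 * k)))).toLinearMap)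


/-- The involution of `{1,...,2k}` swapping `2s ↔ 2s+1` for each `s`. -/
def flipPairs (k : ℕ) : Equiv.Perm (Fin (2 * k)) :=
  Function.Involutive.toPerm
    (fun i => ⟨2 * (i.1 / 2) + (1 - i.1 % 2), by have := i.isLt; omega⟩)
    (by intro i; apply Fin.ext; simp; omega)

/-- The fixed-point-free involution whose orbits are the chords of `C`. -/
def chordInvolution {k : ℕ} (C : LinearChordDiagram k) : Equiv.Perm (Fin (2 * k)) :=
  C.1 * flipPairs k * C.1⁻¹

/-- The number `r` of connected components of the union graph `C ∪ C'` on `{1,...,2k}`,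
i.e. the number of orbits of the group generated by the two chord involutions. -/
noncomputable def unionComponents {k : ℕ} (C C' : LinearChordDiagram k) : ℕ :=
  Nat.card (MulAction.orbitRel.Quotient
    (Subgroup.closure {chordInvolution C, chordInvolution C'} :
      Subgroup (Equiv.Perm (Fin (2 * k)))) (Fin (2 * k)))

lemma perm_inv_apply_self' {α : Type*} (σ : Equiv.Perm α) (x : α) : σ⁻¹ (σ x) = x :=
  Equiv.symm_apply_apply σ x

open PiTensorProduct in
lemma tmulEquiv_symm_apply' {ι ι₂ : Type*} (M : Type*) [AddCommMonoid M] [Module ℚ M]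
    (f : ι ⊕ ι₂ → M) :
    (PiTensorProduct.tmulEquiv (ι := ι) (ι₂ := ι₂) ℚ M).symm (tprod ℚ f) =
      (tprod ℚ (fun a => f (Sum.inl a))) ⊗ₜ[ℚ] (tprod ℚ (fun b => f (Sum.inr b))) := by
  rw [LinearEquiv.symm_apply_eq, PiTensorProduct.tmulEquiv_apply]
  congr 1; ext j; cases j <;> rfl

lemma contractPair_tprod (g : ℕ) (v : Fin 2 → SympVec g) :
    contractPair g (PiTensorProduct.tprod ℚ v) = pairForm g (v 0) (v 1) := by
  simp only [contractPair, LinearMap.comp_apply, LinearEquiv.coe_coe,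
    PiTensorProduct.reindex_tprod, tmulEquiv_symm_apply', TensorProduct.congr_tmul,
    PiTensorProduct.subsingletonEquiv_apply_tprod, TensorProduct.lift.tmul]
  rfl

def shift2 {k : ℕ} (i : Fin (2 * k)) : Fin (2 * (k + 1)) := ⟨i.1 + 2, by have := i.isLt; omega⟩

lemma contractStep_tprod (g k : ℕ) (w : Fin (2 * (k + 1)) → SympVec g) :
    contractStep g k (PiTensorProduct.tprod ℚ w) =
      pairForm g (w ⟨0, by omega⟩) (w ⟨1, by omega⟩) •
        PiTensorProduct.tprod ℚ (fun i => w (shift2 i)) := by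
  have hring : 2 * (k + 1) = 2 + 2 * k := by ring
  have h0 : (((finCongr hring).trans finSumFinEquiv.symm).symm (Sum.inl 0)) =
      (⟨0, by omega⟩ : Fin (2 * (k + 1))) := by
    apply Fin.ext; simp [finSumFinEquiv, finCongr]
  have h1 : (((finCongr hring).trans finSumFinEquiv.symm).symm (Sum.inl 1)) =
      (⟨1, by omega⟩ : Fin (2 * (k + 1))) := by
    apply Fin.ext; simp [finSumFinEquiv, finCongr]
  have h2 : ∀ b : Fin (2 * k), (((finCongr hring).trans finSumFinEquiv.symm).symm (Sum.inr b)) =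
      shift2 b := by
    intro b; apply Fin.ext; simp [finSumFinEquiv, finCongr, shift2]
  simp only [contractStep, LinearMap.comp_apply, LinearEquiv.coe_coe,
    PiTensorProduct.reindex_tprod, tmulEquiv_symm_apply', TensorProduct.map_tmul,
    LinearMap.id_coe, id_eq, contractPair_tprod, TensorProduct.lid_tmul, h0, h1, h2]

lemma shift2_posA {k : ℕ} (s : Fin k) : shift2 (posA s) = posA s.succ := by
  apply Fin.ext; simp [posA, shift2]; omega

lemma shift2_posB {k : ℕ} (s : Fin k) : shift2 (posB s) = posB s.succ := by
  apply Fin.ext; simp [posB, shift2]; omega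

lemma posA_zero {k : ℕ} : posA (0 : Fin (k + 1)) = ⟨0, by omega⟩ := by
  apply Fin.ext; simp [posA]

lemma posB_zero {k : ℕ} : posB (0 : Fin (k + 1)) = ⟨1, by omega⟩ := by
  apply Fin.ext; simp [posB]; exact Nat.mod_eq_of_lt (by omega)

lemma fullContraction_tprod (g : ℕ) : ∀ (k : ℕ) (w : Fin (2 * k) → SympVec g),
    fullContraction g k (PiTensorProduct.tprod ℚ w) =
      ∏ s : Fin k, pairForm g (w (posA s)) (w (posB s))
  | 0, w => by
    simp [fullContraction]
  | (k + 1), w => by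
    rw [fullContraction, LinearMap.comp_apply, contractStep_tprod, map_smul,
      fullContraction_tprod g k, Fin.prod_univ_succ, smul_eq_mul, posA_zero, posB_zero]
    simp only [shift2_posA, shift2_posB]

lemma pairForm_single (g : ℕ) (x y : Fin g ⊕ Fin g) :
    pairForm g (Pi.single x 1) (Pi.single y 1) = Matrix.J (Fin g) ℚ x y := by
  simp [pairForm, Matrix.toLinearMap₂'_apply, Pi.single_apply]

def lab (g k : ℕ) (π' : Equiv.Perm (Fin (2 * k))) (t : Fin k → Fin g × Bool)
    (i : Fin (2 * k)) : Fin g ⊕ Fin g :=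
  let j := π'.symm i
  let s : Fin k := ⟨j.1 / 2, by have := j.isLt; omega⟩
  if j.1 % 2 = 0 then (if (t s).2 then Sum.inl (t s).1 else Sum.inr (t s).1)
  else (if (t s).2 then Sum.inr (t s).1 else Sum.inl (t s).1)

lemma chordVec_eq (g k : ℕ) (π' : Equiv.Perm (Fin (2 * k))) (t : Fin k → Fin g × Bool)
    (i : Fin (2 * k)) : chordVec g k π' t i = Pi.single (lab g k π' t i) 1 := by
  unfold chordVec lab
  dsimp only
  split_ifs <;> rfl

lemma alphaHat_aTensor_eq (g k : ℕ) (π π' : Equiv.Perm (Fin (2 * k))) :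
    alphaHat g k π (aTensor g k π') =
      ((Equiv.Perm.sign π : ℤ) : ℚ) * ((Equiv.Perm.sign π' : ℤ) : ℚ) *
        ∑ t : Fin k → Fin g × Bool, chordCoeff t *
          ∏ s : Fin k, Matrix.J (Fin g) ℚ (lab g k π' t (π (posA s)))
            (lab g k π' t (π (posB s))) := by
  have hsymm : ∀ i : Fin (2 * k), (Equiv.symm π⁻¹) i = π i := by
    intro i; simp [Equiv.Perm.inv_def]
  have hterm : ∀ t : Fin k → Fin g × Bool,
      fullContraction g k (PiTensorProduct.tprod ℚ fun i => chordVec g k π' t (π i)) =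
        ∏ s : Fin k, Matrix.J (Fin g) ℚ (lab g k π' t (π (posA s)))
          (lab g k π' t (π (posB s))) := by
    intro t
    rw [fullContraction_tprod]
    apply Finset.prod_congr rfl
    intro s _
    rw [chordVec_eq, chordVec_eq, pairForm_single]
  simp only [alphaHat, aTensor, LinearMap.smul_apply, LinearMap.comp_apply, LinearEquiv.coe_coe,
    map_smul, map_sum, PiTensorProduct.reindex_tprod, smul_eq_mul, hsymm, hterm]
  rw [Finset.mul_sum, Finset.mul_sum]
  ring_nf
  apply Finset.sum_congr rfl
  intro t _
  ring

section TwoInvolutions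

variable {V : Type*}

/-- `ρ = τ * τ'`. -/
def rr (τ τ' : Equiv.Perm V) : Equiv.Perm V := τ * τ'

lemma rho_tau' {τ τ' : Equiv.Perm V} (hτ : τ * τ = 1) (hτ' : τ' * τ' = 1) (m : ℤ) :
    τ' * (rr τ τ') ^ m = (rr τ τ') ^ (-m) * τ' := by
  have h1 : τ'⁻¹ = τ' := inv_eq_of_mul_eq_one_left hτ'
  have h0 : τ⁻¹ = τ := inv_eq_of_mul_eq_one_left hτ
  have h : τ' * rr τ τ' * τ'⁻¹ = (rr τ τ')⁻¹ := by
    rw [h1, rr, mul_inv_rev, h1, h0]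
    calc τ' * (τ * τ') * τ' = (τ' * τ) * (τ' * τ') := by group
    _ = τ' * τ := by rw [hτ', mul_one]
  have h2 : τ' * (rr τ τ') ^ m * τ'⁻¹ = (rr τ τ') ^ (-m) := by
    rw [← conj_zpow, h, inv_zpow, zpow_neg]
  calc τ' * (rr τ τ') ^ m = τ' * (rr τ τ') ^ m * τ'⁻¹ * τ' := by group
  _ = (rr τ τ') ^ (-m) * τ' := by rw [h2]

lemma rho_tau {τ τ' : Equiv.Perm V} (hτ : τ * τ = 1) (hτ' : τ' * τ' = 1) (m : ℤ) :
    τ * (rr τ τ') ^ m = (rr τ τ') ^ (-m) * τ := by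
  have h1 : τ'⁻¹ = τ' := inv_eq_of_mul_eq_one_left hτ'
  have h0 : τ⁻¹ = τ := inv_eq_of_mul_eq_one_left hτ
  have h : τ * rr τ τ' * τ⁻¹ = (rr τ τ')⁻¹ := by
    rw [h0, rr, mul_inv_rev, h1, h0]
    calc τ * (τ * τ') * τ = (τ * τ) * (τ' * τ) := by group
    _ = τ' * τ := by rw [hτ, one_mul]
  have h2 : τ * (rr τ τ') ^ m * τ⁻¹ = (rr τ τ') ^ (-m) := by
    rw [← conj_zpow, h, inv_zpow, zpow_neg]
  calc τ * (rr τ τ') ^ m = τ * (rr τ τ') ^ m * τ⁻¹ * τ := by group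
  _ = (rr τ τ') ^ (-m) * τ := by rw [h2]

lemma closure_desc {τ τ' : Equiv.Perm V} (hτ : τ * τ = 1) (hτ' : τ' * τ' = 1)
    (x : Equiv.Perm V) (hx : x ∈ Subgroup.closure {τ, τ'}) :
    ∃ n : ℤ, x = rr τ τ' ^ n ∨ x = rr τ τ' ^ n * τ' := by
  have A : ∀ m : ℤ, ∀ y : Equiv.Perm V, τ' * (rr τ τ' ^ m * y) = rr τ τ' ^ (-m) * (τ' * y) := by
    intro m y
    rw [← mul_assoc, rho_tau' hτ hτ' m, mul_assoc]
  have M : ∀ a b : ℤ, ∀ y : Equiv.Perm V,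
      rr τ τ' ^ a * (rr τ τ' ^ b * y) = rr τ τ' ^ (a + b) * y := by
    intro a b y; rw [← mul_assoc, ← zpow_add]
  induction hx using Subgroup.closure_induction with
  | mem z hz =>
    rcases hz with hz | hz
    · exact ⟨1, Or.inr (by rw [hz, zpow_one, rr, mul_assoc, hτ', mul_one])⟩
    · exact ⟨0, Or.inr (by rw [hz, zpow_zero, one_mul])⟩
  | one => exact ⟨0, Or.inl (by rw [zpow_zero])⟩
  | mul x y hx hy ihx ihy =>
    obtain ⟨n, hn | hn⟩ := ihx <;> obtain ⟨m, hm | hm⟩ := ihy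
    · exact ⟨n + m, Or.inl (by rw [hn, hm, zpow_add])⟩
    · exact ⟨n + m, Or.inr (by rw [hn, hm, ← mul_assoc, ← zpow_add])⟩
    · refine ⟨n + -m, Or.inr ?_⟩
      rw [hn, hm, mul_assoc, rho_tau' hτ hτ' m, ← mul_assoc, ← zpow_add]
    · refine ⟨n + -m, Or.inl ?_⟩
      rw [hn, hm, mul_assoc, ← mul_assoc τ', rho_tau' hτ hτ' m, mul_assoc, hτ', mul_one,
        ← zpow_add]
  | inv x hx ihx =>
    obtain ⟨n, hn | hn⟩ := ihx
    · exact ⟨-n, Or.inl (by rw [hn, ← zpow_neg])⟩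
    · refine ⟨n, Or.inr ?_⟩
      rw [hn, mul_inv_rev, inv_eq_of_mul_eq_one_left hτ', ← zpow_neg, rho_tau' hτ hτ',
        neg_neg]

lemma odd_conj {τ τ' : Equiv.Perm V} (hτ : τ * τ = 1) (hτ' : τ' * τ' = 1) (n : ℤ) :
    ∃ m : ℤ, rr τ τ' ^ n * τ' = rr τ τ' ^ m * τ' * (rr τ τ' ^ m)⁻¹ ∨
      rr τ τ' ^ n * τ' = rr τ τ' ^ m * τ * (rr τ τ' ^ m)⁻¹ := by
  rcases Int.even_or_odd n with ⟨m, hm⟩ | ⟨m, hm⟩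
  · refine ⟨m, Or.inl ?_⟩
    conv_rhs => rw [mul_assoc, ← zpow_neg, rho_tau' hτ hτ' (-m), neg_neg, ← mul_assoc,
      ← zpow_add]
    rw [hm]
  · refine ⟨m, Or.inr ?_⟩
    have hρτ : τ = rr τ τ' * τ' := by rw [rr, mul_assoc, hτ', mul_one]
    conv_rhs => rw [mul_assoc, ← zpow_neg, rho_tau hτ hτ' (-m), neg_neg, ← mul_assoc,
      ← zpow_add]
    conv_rhs => rw [show rr τ τ' ^ (m + m) * τ = rr τ τ' ^ (m + m) * (rr τ τ' * τ') from by
      rw [← hρτ]]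
    rw [← mul_assoc, ← zpow_add_one]
    congr 2
    omega

lemma odd_fpf {τ τ' : Equiv.Perm V} (hτ : τ * τ = 1) (hτ' : τ' * τ' = 1)
    (hfτ : ∀ i, τ i ≠ i) (hfτ' : ∀ i, τ' i ≠ i) (n : ℤ) (i : V) :
    (rr τ τ' ^ n * τ') i ≠ i := by
  obtain ⟨m, key | key⟩ := odd_conj hτ hτ' n <;>
  · intro hfix
    rw [key] at hfix
    simp only [Equiv.Perm.mul_apply] at hfix
    have h2 := congrArg ((rr τ τ' ^ m)⁻¹ : Equiv.Perm V) hfix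
    simp only [perm_inv_apply_self'] at h2
    first
      | exact hfτ' _ h2
      | exact hfτ _ h2

end TwoInvolutions

section FlipLab

variable {k : ℕ}

lemma flipPairs_apply (k : ℕ) (i : Fin (2 * k)) :
    (flipPairs k i).1 = 2 * (i.1 / 2) + (1 - i.1 % 2) := rfl

lemma flipPairs_mul_self (k : ℕ) : flipPairs k * flipPairs k = 1 := by
  apply Equiv.ext
  intro i
  apply Fin.ext
  show ((flipPairs k) ((flipPairs k) i)).1 = i.1
  rw [flipPairs_apply, flipPairs_apply]
  omega

lemma flipPairs_ne (i : Fin (2 * k)) : flipPairs k i ≠ i := by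
  intro h
  have h2 := congrArg Fin.val h
  rw [flipPairs_apply] at h2
  omega

lemma flipPairs_posA (s : Fin k) : flipPairs k (posA s) = posB s := by
  apply Fin.ext
  rw [flipPairs_apply]
  simp only [posA, posB]
  omega

lemma flipPairs_posB (s : Fin k) : flipPairs k (posB s) = posA s := by
  apply Fin.ext
  rw [flipPairs_apply]
  simp only [posA, posB]
  omega

/-- conjugated involution -/
def ci (k : ℕ) (π : Equiv.Perm (Fin (2 * k))) : Equiv.Perm (Fin (2 * k)) :=
  π * flipPairs k * π⁻¹

lemma ci_mul_self (π : Equiv.Perm (Fin (2 * k))) : ci k π * ci k π = 1 := by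
  unfold ci
  calc π * flipPairs k * π⁻¹ * (π * flipPairs k * π⁻¹)
      = π * (flipPairs k * flipPairs k) * π⁻¹ := by group
  _ = 1 := by rw [flipPairs_mul_self]; group

lemma ci_ne (π : Equiv.Perm (Fin (2 * k))) (i : Fin (2 * k)) : ci k π i ≠ i := by
  unfold ci
  intro h
  simp only [Equiv.Perm.mul_apply] at h
  have h2 : flipPairs k (π⁻¹ i) = π⁻¹ i := by
    have := congrArg (π⁻¹ : Equiv.Perm (Fin (2 * k))) h
    simpa using this
  exact flipPairs_ne _ h2

lemma ci_apply_posA (π : Equiv.Perm (Fin (2 * k))) (s : Fin k) :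
    ci k π (π (posA s)) = π (posB s) := by
  simp [ci, Equiv.Perm.mul_apply, flipPairs_posA]

lemma ci_apply_posB (π : Equiv.Perm (Fin (2 * k))) (s : Fin k) :
    ci k π (π (posB s)) = π (posA s) := by
  simp [ci, Equiv.Perm.mul_apply, flipPairs_posB]

variable {g : ℕ}

def labAux (g k : ℕ) (t : Fin k → Fin g × Bool) (j : Fin (2 * k)) : Fin g ⊕ Fin g :=
  let s : Fin k := ⟨j.1 / 2, by have := j.isLt; omega⟩
  if j.1 % 2 = 0 then (if (t s).2 then Sum.inl (t s).1 else Sum.inr (t s).1)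
  else (if (t s).2 then Sum.inr (t s).1 else Sum.inl (t s).1)

lemma lab_eq_labAux (π' : Equiv.Perm (Fin (2 * k))) (t : Fin k → Fin g × Bool)
    (i : Fin (2 * k)) : lab g k π' t i = labAux g k t (π'.symm i) := rfl

lemma labAux_posA (t : Fin k → Fin g × Bool) (s : Fin k) :
    labAux g k t (posA s) = (if (t s).2 then Sum.inl (t s).1 else Sum.inr (t s).1) := by
  unfold labAux
  dsimp only
  have h2 : (posA s).1 % 2 = 0 := by simp only [posA]; omega
  rw [if_pos h2]
  have hs : (⟨(posA s).1 / 2, by have := (posA s).isLt; omega⟩ : Fin k) = s := by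
    apply Fin.ext; simp only [posA]; omega
  rw [hs]

lemma labAux_posB (t : Fin k → Fin g × Bool) (s : Fin k) :
    labAux g k t (posB s) = (if (t s).2 then Sum.inr (t s).1 else Sum.inl (t s).1) := by
  unfold labAux
  dsimp only
  have h2 : ¬ ((posB s).1 % 2 = 0) := by simp only [posB]; omega
  rw [if_neg h2]
  have hs : (⟨(posB s).1 / 2, by have := (posB s).isLt; omega⟩ : Fin k) = s := by
    apply Fin.ext; simp only [posB]; omega
  rw [hs]

lemma labAux_flip (t : Fin k → Fin g × Bool) (j : Fin (2 * k)) :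
    labAux g k t (flipPairs k j) = Sum.swap (labAux g k t j) := by
  have hval : (flipPairs k j).1 = 2 * (j.1 / 2) + (1 - j.1 % 2) := flipPairs_apply k j
  have hs : (⟨(flipPairs k j).1 / 2, by have := (flipPairs k j).isLt; omega⟩ : Fin k) =
      (⟨j.1 / 2, by have := j.isLt; omega⟩ : Fin k) := by
    apply Fin.ext; simp only; rw [hval]; omega
  unfold labAux
  dsimp only
  rw [hs]
  rcases Nat.even_or_odd j.1 with he | ho
  · have h1 : j.1 % 2 = 0 := Nat.even_iff.mp he
    have h2 : ¬ ((flipPairs k j).1 % 2 = 0) := by rw [hval]; omega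
    rw [if_neg h2, if_pos h1]
    split <;> rfl
  · have h1 : ¬ (j.1 % 2 = 0) := by have := Nat.odd_iff.mp ho; omega
    have h2 : (flipPairs k j).1 % 2 = 0 := by rw [hval]; have := Nat.odd_iff.mp ho; omega
    rw [if_pos h2, if_neg h1]
    split <;> rfl

lemma lab_posA (π' : Equiv.Perm (Fin (2 * k))) (t : Fin k → Fin g × Bool) (s : Fin k) :
    lab g k π' t (π' (posA s)) = (if (t s).2 then Sum.inl (t s).1 else Sum.inr (t s).1) := by
  rw [lab_eq_labAux, Equiv.symm_apply_apply, labAux_posA]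

lemma lab_posB (π' : Equiv.Perm (Fin (2 * k))) (t : Fin k → Fin g × Bool) (s : Fin k) :
    lab g k π' t (π' (posB s)) = (if (t s).2 then Sum.inr (t s).1 else Sum.inl (t s).1) := by
  rw [lab_eq_labAux, Equiv.symm_apply_apply, labAux_posB]

lemma lab_tau' (π' : Equiv.Perm (Fin (2 * k))) (t : Fin k → Fin g × Bool) (i : Fin (2 * k)) :
    lab g k π' t (ci k π' i) = Sum.swap (lab g k π' t i) := by
  have h : ci k π' i = π' (flipPairs k (π'.symm i)) := by
    simp [ci, Equiv.Perm.mul_apply, Equiv.Perm.inv_def]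
  rw [h, lab_eq_labAux, Equiv.symm_apply_apply, labAux_flip, lab_eq_labAux]

lemma lab_inv (π' : Equiv.Perm (Fin (2 * k))) (t t' : Fin k → Fin g × Bool)
    (h : ∀ s, lab g k π' t (π' (posA s)) = lab g k π' t' (π' (posA s))) : t = t' := by
  funext s
  have h1 := h s
  rw [lab_posA, lab_posA] at h1
  rcases h2 : (t s).2 <;> rcases h2' : (t' s).2 <;>
    rw [h2, h2'] at h1 <;> simp at h1 <;>
    exact Prod.ext (by assumption) (by rw [h2, h2'])

end FlipLab

section Jlemmas

variable {g : ℕ}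

def sgnX (x : Fin g ⊕ Fin g) : ℚ := Sum.elim (fun _ => 1) (fun _ => -1) x

lemma sgnX_one_or (x : Fin g ⊕ Fin g) : sgnX x = 1 ∨ sgnX x = -1 := by
  cases x <;> simp [sgnX]

lemma sgnX_swap (x : Fin g ⊕ Fin g) : sgnX (Sum.swap x) = - sgnX x := by
  cases x <;> simp [sgnX]

lemma J_swap (x : Fin g ⊕ Fin g) : Matrix.J (Fin g) ℚ x (Sum.swap x) = - sgnX x := by
  cases x <;> simp [Matrix.J, sgnX]

lemma J_zero {x y : Fin g ⊕ Fin g} (h : y ≠ Sum.swap x) : Matrix.J (Fin g) ℚ x y = 0 := by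
  cases x <;> cases y <;>
    simp_all [Matrix.J, Matrix.one_apply, Sum.swap]
  · intro hc; exact h (by rw [hc])
  · intro hc; exact h (by rw [hc])

end Jlemmas

section SumSplit

variable {k : ℕ}

def pairEquiv (k : ℕ) : Fin k × Bool ≃ Fin (2 * k) where
  toFun p := if p.2 then posB p.1 else posA p.1
  invFun i := (⟨i.1 / 2, by have := i.isLt; omega⟩, decide (i.1 % 2 = 1))
  left_inv p := by
    rcases p with ⟨s, b⟩
    cases b <;>
    · simp only [posA, posB]
      refine Prod.ext (Fin.ext ?_) ?_ <;> simp <;> omega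
  right_inv i := by
    rcases Nat.even_or_odd i.1 with he | ho
    · have h1 : i.1 % 2 = 0 := Nat.even_iff.mp he
      simp only [h1]
      norm_num
      apply Fin.ext
      simp only [posA]
      omega
    · have h1 : i.1 % 2 = 1 := Nat.odd_iff.mp ho
      simp only [h1]
      norm_num
      apply Fin.ext
      simp only [posB]
      omega

lemma sum_split {M : Type*} [AddCommMonoid M] (h : Fin (2 * k) → M) :
    ∑ i, h i = ∑ s : Fin k, (h (posA s) + h (posB s)) := by
  rw [← Equiv.sum_comp (pairEquiv k) h, Fintype.sum_prod_type]
  apply Finset.sum_congr rfl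
  intro s _
  rw [Fintype.sum_bool]
  simp [pairEquiv, add_comm]

lemma prod_pm_eq {v : Fin (2 * k) → ℚ} (hv : ∀ i, v i = 1 ∨ v i = -1)
    (σ σ' : Equiv.Perm (Fin (2 * k)))
    (hσ : ∀ s : Fin k, v (σ (posB s)) = v (σ (posA s)))
    (hσ' : ∀ s : Fin k, v (σ' (posB s)) = v (σ' (posA s))) :
    ∏ s : Fin k, v (σ (posA s)) = ∏ s : Fin k, v (σ' (posA s)) := by
  classical
  set e : Fin (2 * k) → ℕ := fun i => if v i = 1 then 0 else 1 with he
  have hval : ∀ i, v i = (-1 : ℚ) ^ (e i) := by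
    intro i
    rcases hv i with h | h <;> simp [he, h] <;> norm_num
  have key : ∀ σ'' : Equiv.Perm (Fin (2 * k)),
      (∀ s : Fin k, v (σ'' (posB s)) = v (σ'' (posA s))) →
      2 * (∑ s : Fin k, e (σ'' (posA s))) = ∑ i, e i := by
    intro σ'' hp
    rw [← Equiv.sum_comp σ'' e, sum_split (fun i => e (σ'' i))]
    rw [Finset.mul_sum]
    apply Finset.sum_congr rfl
    intro s _
    have : e (σ'' (posB s)) = e (σ'' (posA s)) := by rw [he]; simp only [hp s]
    rw [this]
    ring
  have hsum : ∑ s : Fin k, e (σ (posA s)) = ∑ s : Fin k, e (σ' (posA s)) := by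
    have h1 := key σ hσ
    have h2 := key σ' hσ'
    omega
  calc ∏ s : Fin k, v (σ (posA s)) = ∏ s : Fin k, (-1 : ℚ) ^ (e (σ (posA s))) := by
        apply Finset.prod_congr rfl; intro s _; rw [hval]
  _ = (-1 : ℚ) ^ (∑ s : Fin k, e (σ (posA s))) := by rw [Finset.prod_pow_eq_pow_sum]
  _ = (-1 : ℚ) ^ (∑ s : Fin k, e (σ' (posA s))) := by rw [hsum]
  _ = ∏ s : Fin k, v (σ' (posA s)) := by
        rw [← Finset.prod_pow_eq_pow_sum]
        apply Finset.prod_congr rfl; intro s _; rw [hval]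

end SumSplit

section Orbits

variable {g k : ℕ} (π π' : Equiv.Perm (Fin (2 * k)))

/-- The group generated by the two chord involutions. -/
abbrev GT (π π' : Equiv.Perm (Fin (2 * k))) : Subgroup (Equiv.Perm (Fin (2 * k))) :=
  Subgroup.closure {ci k π, ci k π'}

abbrev QT (π π' : Equiv.Perm (Fin (2 * k))) : Type :=
  MulAction.orbitRel.Quotient (GT π π') (Fin (2 * k))

def clT (i : Fin (2 * k)) : QT π π' := Quotient.mk'' i

noncomputable def repT (q : QT π π') : Fin (2 * k) := Quotient.out q

lemma clT_repT (q : QT π π') : clT π π' (repT π π' q) = q := Quotient.out_eq' q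

lemma clT_apply {x : Equiv.Perm (Fin (2 * k))} (hx : x ∈ GT π π') (i : Fin (2 * k)) :
    clT π π' (x i) = clT π π' i := by
  apply Quotient.sound'
  rw [MulAction.orbitRel_apply]
  exact ⟨⟨x, hx⟩, rfl⟩

lemma exists_mem_apply_repT (i : Fin (2 * k)) :
    ∃ x : Equiv.Perm (Fin (2 * k)), x ∈ GT π π' ∧ x (repT π π' (clT π π' i)) = i := by
  have h : clT π π' (repT π π' (clT π π' i)) = clT π π' i := clT_repT π π' _
  have h2 : (MulAction.orbitRel (GT π π') (Fin (2 * k)))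
      (repT π π' (clT π π' i)) i := Quotient.exact' h
  rw [MulAction.orbitRel_apply, MulAction.mem_orbit_iff] at h2
  obtain ⟨⟨x, hx⟩, hxi⟩ := h2
  -- x • i = rep; invert
  refine ⟨x⁻¹, inv_mem hx, ?_⟩
  have : x i = repT π π' (clT π π' i) := hxi
  rw [← this]
  simp

end Orbits

section Pmach

variable {V : Type*}

lemma zpow_apply_add (σ : Equiv.Perm V) (a b : ℤ) (x : V) :
    (σ ^ a) ((σ ^ b) x) = (σ ^ (a + b)) x := by
  rw [zpow_add]; rfl

lemma perm_apply_congr {σ σ' : Equiv.Perm V} (h : σ = σ') (x : V) : σ x = σ' x := by rw [h]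

variable {g k : ℕ} (π π' : Equiv.Perm (Fin (2 * k)))

lemma mem_GT_left : ci k π ∈ GT π π' :=
  Subgroup.subset_closure (Set.mem_insert _ _)

lemma mem_GT_right : ci k π' ∈ GT π π' :=
  Subgroup.subset_closure (Set.mem_insert_of_mem _ rfl)

lemma mem_GT_rho_zpow (n : ℤ) : (rr (ci k π) (ci k π')) ^ n ∈ GT π π' :=
  zpow_mem (mul_mem (mem_GT_left π π') (mem_GT_right π π')) n

lemma tau2_tau2 (r : Fin (2 * k)) : (ci k π') ((ci k π') r) = r := by
  have := perm_apply_congr (ci_mul_self π') r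
  simpa [Equiv.Perm.mul_apply] using this

def PT (i : Fin (2 * k)) : Prop :=
  ∃ n : ℤ, ((rr (ci k π) (ci k π')) ^ n) (repT π π' (clT π π' i)) = i

lemma PT_repT (q : QT π π') : PT π π' (repT π π' q) := by
  refine ⟨0, ?_⟩
  rw [zpow_zero, clT_repT]
  rfl

lemma PT_or (i : Fin (2 * k)) :
    PT π π' i ∨ ∃ n : ℤ,
      ((rr (ci k π) (ci k π')) ^ n) ((ci k π') (repT π π' (clT π π' i))) = i := by
  obtain ⟨x, hx, hxi⟩ := exists_mem_apply_repT π π' i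
  obtain ⟨n, h | h⟩ := closure_desc (ci_mul_self π) (ci_mul_self π') x hx
  · left
    exact ⟨n, by rw [← h]; exact hxi⟩
  · right
    refine ⟨n, ?_⟩
    calc ((rr (ci k π) (ci k π')) ^ n) ((ci k π') (repT π π' (clT π π' i)))
        = (rr (ci k π) (ci k π') ^ n * ci k π') (repT π π' (clT π π' i)) := rfl
    _ = x (repT π π' (clT π π' i)) := by rw [← h]
    _ = i := hxi

lemma PT_not_both (i : Fin (2 * k)) (hP : PT π π' i) (n : ℤ)
    (hn : ((rr (ci k π) (ci k π')) ^ n) ((ci k π') (repT π π' (clT π π' i))) = i) : False := by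
  obtain ⟨m, hm⟩ := hP
  have h1 : ((rr (ci k π) (ci k π')) ^ n) ((ci k π') (repT π π' (clT π π' i)))
      = ((rr (ci k π) (ci k π')) ^ m) (repT π π' (clT π π' i)) := by rw [hn, hm]
  have h2 : (ci k π') (repT π π' (clT π π' i))
      = ((rr (ci k π) (ci k π')) ^ (m - n)) (repT π π' (clT π π' i)) := by
    have h3 := congrArg (((rr (ci k π) (ci k π')) ^ n)⁻¹ : Equiv.Perm (Fin (2 * k))) h1
    simp only [perm_inv_apply_self'] at h3
    rw [h3, ← zpow_neg, zpow_apply_add]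
    congr 1
    ring
  have h4 : ((rr (ci k π) (ci k π')) ^ (n - m) * (ci k π')) (repT π π' (clT π π' i))
      = repT π π' (clT π π' i) := by
    show ((rr (ci k π) (ci k π')) ^ (n - m)) ((ci k π') (repT π π' (clT π π' i))) = _
    rw [h2, zpow_apply_add, show n - m + (m - n) = 0 by ring, zpow_zero]
    rfl
  exact odd_fpf (ci_mul_self π) (ci_mul_self π') (ci_ne π) (ci_ne π') (n - m) _ h4

lemma PT_tau' (i : Fin (2 * k)) : PT π π' ((ci k π') i) ↔ ¬ PT π π' i := by
  have hr : repT π π' (clT π π' ((ci k π') i)) = repT π π' (clT π π' i) := by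
    rw [clT_apply π π' (mem_GT_right π π')]
  constructor
  · rintro ⟨m, hm⟩ ⟨n, hn⟩
    rw [hr] at hm
    -- hm : ρ^m r = τ2 i, hn : ρ^n r = i
    have h1 : (ci k π') i = ((rr (ci k π) (ci k π')) ^ (-n))
        ((ci k π') (repT π π' (clT π π' i))) := by
      calc (ci k π') i = (ci k π') (((rr (ci k π) (ci k π')) ^ n)
            (repT π π' (clT π π' i))) := congrArg _ hn.symm
      _ = (ci k π' * (rr (ci k π) (ci k π')) ^ n) (repT π π' (clT π π' i)) := rfl
      _ = ((rr (ci k π) (ci k π')) ^ (-n) * ci k π') (repT π π' (clT π π' i)) :=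
            perm_apply_congr (rho_tau' (ci_mul_self π) (ci_mul_self π') n) _
      _ = ((rr (ci k π) (ci k π')) ^ (-n)) ((ci k π') (repT π π' (clT π π' i))) := rfl
    have h3 : (ci k π') (repT π π' (clT π π' i))
        = ((rr (ci k π) (ci k π')) ^ (n + m)) (repT π π' (clT π π' i)) := by
      have h5 : ((rr (ci k π) (ci k π')) ^ m) (repT π π' (clT π π' i))
          = ((rr (ci k π) (ci k π')) ^ (-n)) ((ci k π') (repT π π' (clT π π' i))) :=
        hm.trans h1
      have h6 := congrArg (((rr (ci k π) (ci k π')) ^ n)) h5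
      rw [zpow_apply_add, zpow_apply_add, show n + -n = 0 by ring, zpow_zero] at h6
      exact (h6.symm.trans (by rfl))
    refine odd_fpf (ci_mul_self π) (ci_mul_self π') (ci_ne π) (ci_ne π') (-(n + m))
      (repT π π' (clT π π' i)) ?_
    show ((rr (ci k π) (ci k π')) ^ (-(n + m)))
        ((ci k π') (repT π π' (clT π π' i))) = repT π π' (clT π π' i)
    rw [h3, zpow_apply_add, show -(n + m) + (n + m) = 0 by ring, zpow_zero]
    rfl
  · intro hni
    obtain h | ⟨n, hn⟩ := PT_or π π' i
    · exact absurd h hni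
    · refine ⟨-n, ?_⟩
      rw [hr]
      have key : (ci k π') i = ((rr (ci k π) (ci k π')) ^ (-n))
          (repT π π' (clT π π' i)) := by
        calc (ci k π') i
            = (ci k π') (((rr (ci k π) (ci k π')) ^ n)
                ((ci k π') (repT π π' (clT π π' i)))) := congrArg _ hn.symm
        _ = (ci k π' * (rr (ci k π) (ci k π')) ^ n)
              ((ci k π') (repT π π' (clT π π' i))) := rfl
        _ = ((rr (ci k π) (ci k π')) ^ (-n) * ci k π')
              ((ci k π') (repT π π' (clT π π' i))) :=
            perm_apply_congr (rho_tau' (ci_mul_self π) (ci_mul_self π') n) _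
        _ = ((rr (ci k π) (ci k π')) ^ (-n))
              ((ci k π') ((ci k π') (repT π π' (clT π π' i)))) := rfl
        _ = ((rr (ci k π) (ci k π')) ^ (-n)) (repT π π' (clT π π' i)) := by
              rw [tau2_tau2]
      exact key.symm

lemma PT_rho (i : Fin (2 * k)) : PT π π' ((rr (ci k π) (ci k π')) i) ↔ PT π π' i := by
  have hr : repT π π' (clT π π' ((rr (ci k π) (ci k π')) i)) = repT π π' (clT π π' i) := by
    rw [clT_apply π π' (by simpa using mem_GT_rho_zpow π π' 1)]
  constructor
  · rintro ⟨m, hm⟩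
    rw [hr] at hm
    refine ⟨-1 + m, ?_⟩
    calc ((rr (ci k π) (ci k π')) ^ (-1 + m)) (repT π π' (clT π π' i))
        = ((rr (ci k π) (ci k π')) ^ (-1 : ℤ))
            (((rr (ci k π) (ci k π')) ^ m) (repT π π' (clT π π' i))) :=
          (zpow_apply_add _ _ _ _).symm
    _ = ((rr (ci k π) (ci k π')) ^ (-1 : ℤ)) ((rr (ci k π) (ci k π')) i) := by rw [hm]
    _ = i := by rw [zpow_neg_one]; simp
  · rintro ⟨n, hn⟩
    refine ⟨1 + n, ?_⟩
    rw [hr, ← zpow_apply_add, hn, zpow_one]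

lemma PT_tau (i : Fin (2 * k)) : PT π π' ((ci k π) i) ↔ ¬ PT π π' i := by
  have h : rr (ci k π) (ci k π') * (ci k π') = ci k π := by
    rw [rr, mul_assoc, ci_mul_self, mul_one]
  have h1 : (ci k π) i = (rr (ci k π) (ci k π')) ((ci k π') i) := by
    conv_lhs => rw [← h]
    rfl
  rw [h1, PT_rho, PT_tau']

end Pmach

section GoodMach

variable {g k : ℕ} (π π' : Equiv.Perm (Fin (2 * k)))

def GoodT (t : Fin k → Fin g × Bool) : Prop :=
  ∀ i, lab g k π' t (ci k π i) = Sum.swap (lab g k π' t i)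

open scoped Classical in
noncomputable def ellT (f : QT π π' → Fin g ⊕ Fin g) (i : Fin (2 * k)) : Fin g ⊕ Fin g :=
  if PT π π' i then f (clT π π' i) else Sum.swap (f (clT π π' i))

noncomputable def tfT (f : QT π π' → Fin g ⊕ Fin g) (s : Fin k) : Fin g × Bool :=
  Sum.elim (fun a => (a, true)) (fun a => (a, false)) (ellT π π' f (π' (posA s)))

lemma ellT_tau' (f : QT π π' → Fin g ⊕ Fin g) (i : Fin (2 * k)) :
    ellT π π' f (ci k π' i) = Sum.swap (ellT π π' f i) := by
  unfold ellT
  rw [clT_apply π π' (mem_GT_right π π')]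
  by_cases hP : PT π π' i
  · rw [if_pos hP, if_neg (fun h => (PT_tau' π π' i).mp h hP)]
  · rw [if_neg hP, if_pos ((PT_tau' π π' i).mpr hP), Sum.swap_swap]

lemma ellT_tau (f : QT π π' → Fin g ⊕ Fin g) (i : Fin (2 * k)) :
    ellT π π' f (ci k π i) = Sum.swap (ellT π π' f i) := by
  unfold ellT
  rw [clT_apply π π' (mem_GT_left π π')]
  by_cases hP : PT π π' i
  · rw [if_pos hP, if_neg (fun h => (PT_tau π π' i).mp h hP)]
  · rw [if_neg hP, if_pos ((PT_tau π π' i).mpr hP), Sum.swap_swap]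

lemma ellT_repT (f : QT π π' → Fin g ⊕ Fin g) (q : QT π π') :
    ellT π π' f (repT π π' q) = f q := by
  unfold ellT
  rw [if_pos (PT_repT π π' q), clT_repT]

lemma exists_pos (σ : Equiv.Perm (Fin (2 * k))) (i : Fin (2 * k)) :
    ∃ s : Fin k, i = σ (posA s) ∨ i = σ (posB s) := by
  obtain ⟨j, rfl⟩ : ∃ j, i = σ j := ⟨σ.symm i, by simp⟩
  have hlt := j.isLt
  refine ⟨⟨j.1 / 2, by omega⟩, ?_⟩
  rcases Nat.even_or_odd j.1 with he | ho
  · left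
    congr 1
    apply Fin.ext
    simp only [posA]
    have := Nat.even_iff.mp he
    omega
  · right
    congr 1
    apply Fin.ext
    simp only [posB]
    have := Nat.odd_iff.mp ho
    omega

lemma lab_tfT (f : QT π π' → Fin g ⊕ Fin g) (i : Fin (2 * k)) :
    lab g k π' (tfT π π' f) i = ellT π π' f i := by
  have base : ∀ s : Fin k, lab g k π' (tfT π π' f) (π' (posA s)) = ellT π π' f (π' (posA s)) := by
    intro s
    rw [lab_posA]
    rcases hx : ellT π π' f (π' (posA s)) with a | a <;>
      simp [tfT, hx]
  obtain ⟨s, hs | hs⟩ := exists_pos π' i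
  · rw [hs]; exact base s
  · rw [hs]
    have h1 : π' (posB s) = ci k π' (π' (posA s)) := (ci_apply_posA π' s).symm
    rw [h1, lab_tau', ellT_tau', base s]

lemma good_tfT (f : QT π π' → Fin g ⊕ Fin g) : GoodT π π' (tfT π π' f) := by
  intro i
  rw [lab_tfT, lab_tfT, ellT_tau]

lemma lab_good_eq (t : Fin k → Fin g × Bool) (ht : GoodT π π' t) (i : Fin (2 * k)) :
    lab g k π' t i = ellT π π' (fun q => lab g k π' t (repT π π' q)) i := by
  have hρ : ∀ j, lab g k π' t ((rr (ci k π) (ci k π')) j) = lab g k π' t j := by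
    intro j
    have h1 : (rr (ci k π) (ci k π')) j = (ci k π) ((ci k π') j) := rfl
    rw [h1, ht, lab_tau', Sum.swap_swap]
  have hρz : ∀ n : ℤ, ∀ j, lab g k π' t (((rr (ci k π) (ci k π')) ^ n) j) = lab g k π' t j := by
    intro n
    induction n using Int.induction_on with
    | zero => intro j; rw [zpow_zero]; rfl
    | succ n ih =>
      intro j
      have h1 : ((rr (ci k π) (ci k π')) ^ ((n : ℤ) + 1)) j
          = (rr (ci k π) (ci k π')) (((rr (ci k π) (ci k π')) ^ (n : ℤ)) j) := by
        rw [show ((n : ℤ) + 1) = (1 + (n : ℤ)) from by ring,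
          ← zpow_apply_add (rr (ci k π) (ci k π')) 1 (n : ℤ) j, zpow_one]
      rw [h1, hρ, ih]
    | pred n ih =>
      intro j
      have h1 : (rr (ci k π) (ci k π')) (((rr (ci k π) (ci k π')) ^ (-(n : ℤ) - 1)) j)
          = ((rr (ci k π) (ci k π')) ^ (-(n : ℤ))) j := by
        have h2 := zpow_apply_add (rr (ci k π) (ci k π')) 1 (-(n : ℤ) - 1) j
        rw [zpow_one] at h2
        rw [h2, show (1 + (-(n : ℤ) - 1)) = -(n : ℤ) from by ring]
      rw [← ih j, ← h1, hρ]
  obtain hP | ⟨n, hn⟩ := PT_or π π' i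
  · unfold ellT
    rw [if_pos hP]
    obtain ⟨n, hn⟩ := hP
    conv_lhs => rw [← hn]
    rw [hρz]
  · have hni : ¬ PT π π' i := fun hP => PT_not_both π π' i hP n hn
    unfold ellT
    rw [if_neg hni]
    conv_lhs => rw [← hn]
    rw [hρz]
    rw [show (ci k π') (repT π π' (clT π π' i))
        = ci k π' (repT π π' (clT π π' i)) from rfl, lab_tau']

lemma tfT_lab (t : Fin k → Fin g × Bool) (ht : GoodT π π' t) :
    tfT π π' (fun q => lab g k π' t (repT π π' q)) = t := by
  apply lab_inv π'
  intro s
  rw [lab_tfT, ← lab_good_eq π π' t ht]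

lemma lab_tfT_rep (f : QT π π' → Fin g ⊕ Fin g) :
    (fun q => lab g k π' (tfT π π' f) (repT π π' q)) = f := by
  funext q
  rw [lab_tfT, ellT_repT]

noncomputable def goodEquiv :
    {t : Fin k → Fin g × Bool // GoodT π π' t} ≃ (QT π π' → Fin g ⊕ Fin g) where
  toFun x := fun q => lab g k π' x.1 (repT π π' q)
  invFun f := ⟨tfT π π' f, good_tfT π π' f⟩
  left_inv x := Subtype.ext (tfT_lab π π' x.1 x.2)
  right_inv f := lab_tfT_rep π π' f

end GoodMach

section Weights

variable {g k : ℕ} (π π' : Equiv.Perm (Fin (2 * k)))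

noncomputable def WT (t : Fin k → Fin g × Bool) : ℚ :=
  chordCoeff t * ∏ s : Fin k,
    Matrix.J (Fin g) ℚ (lab g k π' t (π (posA s))) (lab g k π' t (π (posB s)))

lemma WT_zero {t : Fin k → Fin g × Bool} (h : ¬ GoodT π π' t) : WT π π' t = 0 := by
  rw [GoodT, not_forall] at h
  obtain ⟨i, hi⟩ := h
  have hfac : ∃ s : Fin k,
      Matrix.J (Fin g) ℚ (lab g k π' t (π (posA s))) (lab g k π' t (π (posB s))) = 0 := by
    obtain ⟨s, hs | hs⟩ := exists_pos π i
    · refine ⟨s, J_zero ?_⟩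
      rw [hs] at hi
      rw [ci_apply_posA] at hi
      exact hi
    · refine ⟨s, J_zero ?_⟩
      rw [hs] at hi
      rw [ci_apply_posB] at hi
      intro hc
      apply hi
      rw [hc, Sum.swap_swap]
  obtain ⟨s, hs⟩ := hfac
  unfold WT
  rw [Finset.prod_eq_zero (Finset.mem_univ s) hs, mul_zero]

lemma WT_good {t : Fin k → Fin g × Bool} (ht : GoodT π π' t) :
    WT π π' t = (-1 : ℚ) ^ k * ((∏ s : Fin k, sgnX (lab g k π' t (π' (posA s)))) *
      (∏ s : Fin k, sgnX (lab g k π' t (π (posA s))))) := by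
  have hcoeff : chordCoeff t = ∏ s : Fin k, sgnX (lab g k π' t (π' (posA s))) := by
    unfold chordCoeff
    apply Finset.prod_congr rfl
    intro s _
    rw [lab_posA]
    rcases (t s).2 <;> simp [sgnX]
  have hJ : ∀ s : Fin k,
      Matrix.J (Fin g) ℚ (lab g k π' t (π (posA s))) (lab g k π' t (π (posB s)))
        = - sgnX (lab g k π' t (π (posA s))) := by
    intro s
    have h1 : lab g k π' t (π (posB s)) = Sum.swap (lab g k π' t (π (posA s))) := by
      rw [← ci_apply_posA π s, ht]
    rw [h1, J_swap]
  unfold WT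
  rw [hcoeff]
  have h2 : ∏ s : Fin k,
      Matrix.J (Fin g) ℚ (lab g k π' t (π (posA s))) (lab g k π' t (π (posB s)))
        = (-1 : ℚ) ^ k * ∏ s : Fin k, sgnX (lab g k π' t (π (posA s))) := by
    calc ∏ s : Fin k, Matrix.J (Fin g) ℚ (lab g k π' t (π (posA s))) (lab g k π' t (π (posB s)))
        = ∏ s : Fin k, (-1 : ℚ) * sgnX (lab g k π' t (π (posA s))) := by
          apply Finset.prod_congr rfl
          intro s _
          rw [hJ s]
          ring
    _ = (-1 : ℚ) ^ k * ∏ s : Fin k, sgnX (lab g k π' t (π (posA s))) := by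
          rw [Finset.prod_mul_distrib, Finset.prod_const, Finset.card_univ, Fintype.card_fin]
  rw [h2]
  ring

lemma WT_mul_WT {t t' : Fin k → Fin g × Bool} (ht : GoodT π π' t) (ht' : GoodT π π' t') :
    WT π π' t * WT π π' t' = 1 := by
  set v : Fin (2 * k) → ℚ := fun i => sgnX (lab g k π' t i) * sgnX (lab g k π' t' i) with hv
  have hv1 : ∀ i, v i = 1 ∨ v i = -1 := by
    intro i
    rcases sgnX_one_or (lab g k π' t i) with h1 | h1 <;>
      rcases sgnX_one_or (lab g k π' t' i) with h2 | h2 <;>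
      simp [hv, h1, h2]
  have hσ : ∀ s : Fin k, v (π (posB s)) = v (π (posA s)) := by
    intro s
    have h1 : lab g k π' t (π (posB s)) = Sum.swap (lab g k π' t (π (posA s))) := by
      rw [← ci_apply_posA π s, ht]
    have h2 : lab g k π' t' (π (posB s)) = Sum.swap (lab g k π' t' (π (posA s))) := by
      rw [← ci_apply_posA π s, ht']
    simp [hv, h1, h2, sgnX_swap]
  have hσ' : ∀ s : Fin k, v (π' (posB s)) = v (π' (posA s)) := by
    intro s
    have h1 : lab g k π' t (π' (posB s)) = Sum.swap (lab g k π' t (π' (posA s))) := by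
      rw [← ci_apply_posA π' s, lab_tau']
    have h2 : lab g k π' t' (π' (posB s)) = Sum.swap (lab g k π' t' (π' (posA s))) := by
      rw [← ci_apply_posA π' s, lab_tau']
    simp [hv, h1, h2, sgnX_swap]
  have key := prod_pm_eq hv1 π π' hσ hσ'
  rw [WT_good π π' ht, WT_good π π' ht']
  have expand : ((-1 : ℚ) ^ k * ((∏ s : Fin k, sgnX (lab g k π' t (π' (posA s)))) *
      (∏ s : Fin k, sgnX (lab g k π' t (π (posA s)))))) *
      ((-1 : ℚ) ^ k * ((∏ s : Fin k, sgnX (lab g k π' t' (π' (posA s)))) *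
      (∏ s : Fin k, sgnX (lab g k π' t' (π (posA s)))))) =
      ((-1 : ℚ) ^ k * (-1 : ℚ) ^ k) *
      (((∏ s : Fin k, sgnX (lab g k π' t (π' (posA s)))) *
        (∏ s : Fin k, sgnX (lab g k π' t' (π' (posA s))))) *
      ((∏ s : Fin k, sgnX (lab g k π' t (π (posA s)))) *
        (∏ s : Fin k, sgnX (lab g k π' t' (π (posA s)))))) := by ring
  rw [expand]
  rw [← Finset.prod_mul_distrib, ← Finset.prod_mul_distrib]
  have hp1 : (∏ s : Fin k, sgnX (lab g k π' t (π' (posA s))) * sgnX (lab g k π' t' (π' (posA s))))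
      = ∏ s : Fin k, v (π' (posA s)) := rfl
  have hp2 : (∏ s : Fin k, sgnX (lab g k π' t (π (posA s))) * sgnX (lab g k π' t' (π (posA s))))
      = ∏ s : Fin k, v (π (posA s)) := rfl
  rw [hp1, hp2, ← key]
  have hsq : (∏ s : Fin k, v (π (posA s))) * (∏ s : Fin k, v (π (posA s))) = 1 := by
    rw [← Finset.prod_mul_distrib]
    rw [Finset.prod_eq_one]
    intro s _
    rcases hv1 (π (posA s)) with h | h <;> rw [h] <;> norm_num
  rw [hsq, mul_one]
  rw [← pow_add, ← two_mul]
  rw [pow_mul]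
  norm_num

lemma sum_WT :
    ∃ ε₀ : ℚ, (ε₀ = 1 ∨ ε₀ = -1) ∧
      ∑ t : Fin k → Fin g × Bool, WT π π' t =
        ε₀ * (2 * (g : ℚ)) ^ (Nat.card (QT π π')) := by
  classical
  set S := Finset.univ.filter (fun t : Fin k → Fin g × Bool => GoodT π π' t) with hS
  have h1 : ∑ t : Fin k → Fin g × Bool, WT π π' t = ∑ t ∈ S, WT π π' t := by
    rw [hS]
    rw [Finset.sum_filter_of_ne]
    intro t _ hne
    by_contra hg
    exact hne (WT_zero π π' hg)
  have hcard : (S.card : ℚ) = (2 * (g : ℚ)) ^ (Nat.card (QT π π')) := by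
    have e1 : S.card = Fintype.card {t : Fin k → Fin g × Bool // GoodT π π' t} :=
      (Fintype.card_subtype _).symm
    have e2 : Fintype.card {t : Fin k → Fin g × Bool // GoodT π π' t}
        = Nat.card {t : Fin k → Fin g × Bool // GoodT π π' t} :=
      (Nat.card_eq_fintype_card).symm
    have e3 : Nat.card {t : Fin k → Fin g × Bool // GoodT π π' t}
        = Nat.card (QT π π' → Fin g ⊕ Fin g) := Nat.card_congr (goodEquiv π π')
    have e4 : Nat.card (QT π π' → Fin g ⊕ Fin g)
        = Nat.card (Fin g ⊕ Fin g) ^ Nat.card (QT π π') := Nat.card_fun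
    have e5 : Nat.card (Fin g ⊕ Fin g) = 2 * g := by
      rw [Nat.card_eq_fintype_card, Fintype.card_sum, Fintype.card_fin]
      omega
    rw [e1, e2, e3, e4, e5]
    push_cast
    ring
  by_cases hex : ∃ t : Fin k → Fin g × Bool, GoodT π π' t
  · obtain ⟨t₀, ht₀⟩ := hex
    refine ⟨WT π π' t₀, ?_, ?_⟩
    · exact mul_self_eq_one_iff.mp (WT_mul_WT π π' ht₀ ht₀)
    · rw [h1]
      have hval : ∀ t ∈ S, WT π π' t = WT π π' t₀ := by
        intro t htS
        rw [hS, Finset.mem_filter] at htS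
        have ha := WT_mul_WT π π' htS.2 ht₀
        have hb := WT_mul_WT π π' ht₀ ht₀
        calc WT π π' t = WT π π' t * (WT π π' t₀ * WT π π' t₀) := by rw [hb, mul_one]
        _ = (WT π π' t * WT π π' t₀) * WT π π' t₀ := by ring
        _ = WT π π' t₀ := by rw [ha, one_mul]
      rw [Finset.sum_congr rfl hval, Finset.sum_const, nsmul_eq_mul, hcard]
      ring
  · refine ⟨1, Or.inl rfl, ?_⟩
    have hSempty : S = ∅ := by
      rw [hS]
      apply Finset.filter_eq_empty_iff.mpr
      intro t _
      exact fun hg => hex ⟨t, hg⟩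
    rw [h1, hSempty, Finset.sum_empty, ← hcard, hSempty]
    simp

end Weights

/-- for linear chord diagrams `C, C'` on `2k` vertices, the pairing
`α_C(a_{C'})` equals `±(2g)^r` where `r` is the number of connected components of `C ∪ C'`. -/
theorem alpha_aTensor_pairing (g k : ℕ) (C C' : LinearChordDiagram k) :
    ∃ ε : ℚ, (ε = 1 ∨ ε = -1) ∧
      alphaHat g k C.1 (aTensor g k C'.1) =
        ε * (2 * (g : ℚ)) ^ (unionComponents C C') := by
  obtain ⟨ε₀, hε₀, hsum⟩ := sum_WT (g := g) (k := k) C.1 C'.1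
  have halg := alphaHat_aTensor_eq g k C.1 C'.1
  have hU : unionComponents C C' = Nat.card (QT C.1 C'.1) := rfl
  have ha : ((Equiv.Perm.sign C.1 : ℤ) : ℚ) = 1 ∨ ((Equiv.Perm.sign C.1 : ℤ) : ℚ) = -1 := by
    rcases Int.units_eq_one_or (Equiv.Perm.sign C.1) with h | h <;> rw [h] <;> norm_num
  have hb : ((Equiv.Perm.sign C'.1 : ℤ) : ℚ) = 1 ∨ ((Equiv.Perm.sign C'.1 : ℤ) : ℚ) = -1 := by
    rcases Int.units_eq_one_or (Equiv.Perm.sign C'.1) with h | h <;> rw [h] <;> norm_num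
  refine ⟨((Equiv.Perm.sign C.1 : ℤ) : ℚ) * ((Equiv.Perm.sign C'.1 : ℤ) : ℚ) * ε₀, ?_, ?_⟩
  · rcases ha with h | h <;> rcases hb with h2 | h2 <;> rcases hε₀ with h3 | h3 <;>
      rw [h, h2, h3] <;> norm_num
  · rw [halg]
    have hkey : (∑ t : Fin k → Fin g × Bool, chordCoeff t * ∏ s : Fin k,
        Matrix.J (Fin g) ℚ (lab g k C'.1 t (C.1 (posA s))) (lab g k C'.1 t (C.1 (posB s))))
        = ε₀ * (2 * (g : ℚ)) ^ (unionComponents C C') := by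
      rw [hU]
      exact hsum
    rw [hkey]
    ring
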